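/- Let H be a real Hilbert space, f : H → ℝ ∪ {+∞} a proper closed convex function which is bounded below, and S_f an affine support set of f. Let (a*, v*) be the minimizer of ‖(a, v)‖² over S_f. Then f is nonnegative on H if and only if a* ≥ 0. Furthermore, if a* < 0, then f((1/a*) v*) < 0. -/

import Mathlib

/-- for bounded below f, f is nonnegative iff a* ≥ 0, where (a*, v*)
is the minimal-norm element of S_f; moreover if a* < 0 then f((1/a*) v*) < 0. -/
theorem nonneg_iff_astar_nonneg
    {H : Type*} [NormedAddCommGroup H] [InnerProductSpace ℝ H] [CompleteSpace H]
    (f : H → EReal) (S : Set (ℝ × H))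
    (hproper_top : ∃ x, f x ≠ ⊤) (hproper_bot : ∀ x, f x ≠ ⊥)
    (hlsc : LowerSemicontinuous f)
    (hconv : Convex ℝ {p : H × ℝ | f p.1 ≤ (p.2 : EReal)})
    (hSclosed : IsClosed S) (hSconv : Convex ℝ S)
    (hrep : ∀ x, f x = ⨆ p ∈ S, ((p.1 + inner ℝ p.2 x : ℝ) : EReal))
    (hbdd : ∃ c : ℝ, ∀ x, (c : EReal) ≤ f x)
    (pstar : ℝ × H) (hpmem : pstar ∈ S)
    (hpmin : ∀ q ∈ S, pstar.1 ^ 2 + ‖pstar.2‖ ^ 2 ≤ q.1 ^ 2 + ‖q.2‖ ^ 2) :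
    ((∀ x, (0 : EReal) ≤ f x) ↔ 0 ≤ pstar.1)
      ∧ (pstar.1 < 0 → f (pstar.1⁻¹ • pstar.2) < 0) := by
  obtain ⟨x₁, hx₁⟩ := hproper_top
  obtain ⟨c, hc⟩ := hbdd
  -- every individual affine term is ≤ f x
  have hterm : ∀ (x : H), ∀ p ∈ S, ((p.1 + inner ℝ p.2 x : ℝ) : EReal) ≤ f x := by
    intro x p hp
    rw [hrep x]
    exact le_iSup₂ (f := fun p (_ : p ∈ S) => ((p.1 + inner ℝ p.2 x : ℝ) : EReal)) p hp
  -- upper bound principle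
  have hub : ∀ (x : H) (r : ℝ), (∀ p ∈ S, p.1 + inner ℝ p.2 x ≤ r) → f x ≤ (r : EReal) := by
    intro x r h
    rw [hrep x]
    exact iSup₂_le fun p hp => EReal.coe_le_coe_iff.mpr (h p hp)
  -- norm expansion
  have expand : ∀ (x y : H) (t : ℝ),
      ‖x + t • y‖ ^ 2 = ‖x‖ ^ 2 + 2 * t * inner ℝ x y + t ^ 2 * ‖y‖ ^ 2 := by
    intro x y t
    rw [norm_add_sq_real, real_inner_smul_right, norm_smul, Real.norm_eq_abs, mul_pow, sq_abs]
    ring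
  -- variational inequality for the minimal norm point
  have hvar : ∀ q ∈ S, pstar.1 ^ 2 + ‖pstar.2‖ ^ 2 ≤ pstar.1 * q.1 + inner ℝ pstar.2 q.2 := by
    intro q hq
    by_contra hcon
    push_neg at hcon
    set D : ℝ := pstar.1 * (q.1 - pstar.1) + inner ℝ pstar.2 (q.2 - pstar.2) with hD
    set E : ℝ := (q.1 - pstar.1) ^ 2 + ‖q.2 - pstar.2‖ ^ 2 with hE
    have hDneg : D < 0 := by
      rw [hD, inner_sub_right, real_inner_self_eq_norm_sq]
      nlinarith [hcon]
    have key : ∀ t : ℝ, 0 < t → t ≤ 1 → 0 ≤ 2 * t * D + t ^ 2 * E := by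
      intro t ht0 ht1
      have hmem : (pstar.1 + t * (q.1 - pstar.1), pstar.2 + t • (q.2 - pstar.2)) ∈ S := by
        have heq : ((1 - t) • pstar + t • q)
            = (pstar.1 + t * (q.1 - pstar.1), pstar.2 + t • (q.2 - pstar.2)) := by
          ext
          · simp only [Prod.fst_add, Prod.smul_fst, smul_eq_mul]
            ring
          · simp only [Prod.snd_add, Prod.smul_snd]
            module
        rw [← heq]
        exact hSconv hpmem hq (by linarith) ht0.le (by ring)
      have h2 := hpmin _ hmem
      simp only at h2
      rw [expand pstar.2 (q.2 - pstar.2) t] at h2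
      rw [hD, hE]
      nlinarith [h2]
    have hE0 : 0 ≤ E := by positivity
    rcases eq_or_lt_of_le hE0 with hE1 | hE1
    · have := key 1 one_pos le_rfl
      rw [← hE1] at this
      nlinarith [this]
    · set t : ℝ := min 1 (-D / E) with ht
      have ht0 : 0 < t := lt_min one_pos (div_pos (neg_pos.mpr hDneg) hE1)
      have ht1 : t ≤ 1 := min_le_left _ _
      have h5 : t * E ≤ -D := by
        calc t * E ≤ (-D / E) * E := mul_le_mul_of_nonneg_right (min_le_right _ _) hE0
        _ = -D := div_mul_cancel₀ _ (ne_of_gt hE1)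
      have h6 := key t ht0 ht1
      nlinarith [mul_le_mul_of_nonneg_left h5 ht0.le, mul_pos ht0 (neg_pos.mpr hDneg)]
  -- Part 2 : if a* < 0 then f(a*⁻¹ v*) < 0
  have hpart2 : pstar.1 < 0 → f (pstar.1⁻¹ • pstar.2) < 0 := by
    intro ha
    have hne : pstar.1 ≠ 0 := ne_of_lt ha
    have hble : f (pstar.1⁻¹ • pstar.2) ≤ ((pstar.1 : ℝ) : EReal) := by
      apply hub
      intro p hp
      have h1 := hvar p hp
      have h2 : (inner ℝ p.2 (pstar.1⁻¹ • pstar.2) : ℝ) = pstar.1⁻¹ * inner ℝ pstar.2 p.2 := by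
        rw [real_inner_smul_right, real_inner_comm]
      rw [h2]
      have h4 : pstar.1 ^ 2 ≤ pstar.1 * p.1 + inner ℝ pstar.2 p.2 := by
        nlinarith [h1, sq_nonneg ‖pstar.2‖]
      have h5 : pstar.1⁻¹ < 0 := inv_lt_zero.mpr ha
      have h6 : p.1 + pstar.1⁻¹ * (inner ℝ pstar.2 p.2 : ℝ)
          = pstar.1⁻¹ * (pstar.1 * p.1 + inner ℝ pstar.2 p.2) := by
        field_simp
      have h7 : pstar.1⁻¹ * pstar.1 ^ 2 = pstar.1 := by
        field_simp [pow_two]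
      have h8 := mul_le_mul_of_nonpos_left h4 h5.le
      linarith [h6, h7, h8]
    have hlt : ((pstar.1 : ℝ) : EReal) < (0 : EReal) := by exact_mod_cast ha
    exact lt_of_le_of_lt hble hlt
  -- r₁ : real value of f at x₁
  obtain ⟨r₁, hr₁⟩ : ∃ r : ℝ, f x₁ = (r : EReal) :=
    ⟨(f x₁).toReal, (EReal.coe_toReal hx₁ (hproper_bot x₁)).symm⟩
  have hcr : c ≤ r₁ := by
    have := hc x₁
    rw [hr₁] at this
    exact_mod_cast this
  -- S is nonempty
  have hSne : S.Nonempty := by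
    rcases Set.eq_empty_or_nonempty S with h | h
    · exfalso
      have h1 := hrep x₁
      rw [h] at h1
      simp at h1
      exact hproper_bot x₁ h1
    · exact h
  -- 0 belongs to the closure of the set of slopes
  have h0cl : (0 : H) ∈ closure (Prod.snd '' S) := by
    by_contra h0
    have hVconv : Convex ℝ (Prod.snd '' S) := hSconv.linear_image (LinearMap.snd ℝ ℝ H)
    have hKconv : Convex ℝ (closure (Prod.snd '' S)) := hVconv.closure
    have hKne : (closure (Prod.snd '' S)).Nonempty := (hSne.image _).closure
    obtain ⟨z, hzK, hzmin⟩ := exists_norm_eq_iInf_of_complete_convex hKne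
      isClosed_closure.isComplete hKconv 0
    have hzineq := (norm_eq_iInf_iff_real_inner_le_zero hKconv hzK).mp hzmin
    have hz0 : z ≠ 0 := fun h => h0 (h ▸ hzK)
    have hδ : 0 < ‖z‖ ^ 2 := pow_pos (norm_pos_iff.mpr hz0) 2
    have hzv : ∀ v ∈ Prod.snd '' S, ‖z‖ ^ 2 ≤ inner ℝ z v := by
      intro v hv
      have h1 := hzineq v (subset_closure hv)
      rw [zero_sub, inner_neg_left, inner_sub_right, real_inner_self_eq_norm_sq] at h1
      linarith
    set t₀ : ℝ := (r₁ - c + 1) / ‖z‖ ^ 2 with ht₀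
    have ht₀pos : 0 < t₀ := div_pos (by linarith) hδ
    have hineq : f (x₁ - t₀ • z) ≤ ((r₁ - t₀ * ‖z‖ ^ 2 : ℝ) : EReal) := by
      apply hub
      intro p hp
      have h1 : p.1 + inner ℝ p.2 x₁ ≤ r₁ := by
        have := hterm x₁ p hp
        rw [hr₁] at this
        exact_mod_cast this
      have h2 : ‖z‖ ^ 2 ≤ inner ℝ z p.2 := hzv p.2 ⟨p, hp, rfl⟩
      have h3 : (inner ℝ p.2 (x₁ - t₀ • z) : ℝ) = inner ℝ p.2 x₁ - t₀ * inner ℝ z p.2 := by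
        rw [inner_sub_right, real_inner_smul_right, real_inner_comm p.2 z]
      rw [h3]
      nlinarith [mul_le_mul_of_nonneg_left h2 ht₀pos.le]
    have hcontr := le_trans (hc (x₁ - t₀ • z)) hineq
    have h4 : c ≤ r₁ - t₀ * ‖z‖ ^ 2 := by exact_mod_cast hcontr
    have ht₀val : t₀ * ‖z‖ ^ 2 = r₁ - c + 1 := div_mul_cancel₀ _ (ne_of_gt hδ)
    linarith
  -- the infimum m
  set A : Set ℝ := {t | ∃ x, f x ≤ (t : EReal)} with hA
  have hAne : A.Nonempty := ⟨r₁, x₁, hr₁.le⟩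
  have hAbdd : BddBelow A := by
    refine ⟨c, fun t ht => ?_⟩
    obtain ⟨x, hx⟩ := ht
    have := (hc x).trans hx
    exact_mod_cast this
  set m : ℝ := sInf A with hm
  have hlow : ∀ x, (m : EReal) ≤ f x := by
    intro x
    by_contra h
    push_neg at h
    have hxt : f x ≠ ⊤ := h.ne_top
    have hs : f x = ((f x).toReal : EReal) := (EReal.coe_toReal hxt (hproper_bot x)).symm
    have h2 : (f x).toReal < m := by
      rw [hs] at h
      exact_mod_cast h
    have h3 : (f x).toReal ∈ A := ⟨x, hs.le⟩
    exact absurd (csInf_le hAbdd h3) (not_le.mpr h2)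
  have happrox : ∀ ε : ℝ, 0 < ε → ∃ x, f x ≤ ((m + ε : ℝ) : EReal) := by
    intro ε hε
    obtain ⟨t, htA, htlt⟩ := exists_lt_of_csInf_lt hAne (show sInf A < m + ε by rw [← hm]; linarith)
    obtain ⟨x, hx⟩ := htA
    exact ⟨x, hx.trans (by exact_mod_cast htlt.le)⟩
  -- KEY: (m, 0) ∈ S
  have hmS : ((m, (0 : H)) : ℝ × H) ∈ S := by
    by_contra hms
    obtain ⟨φ, u, hu1, hu2⟩ := geometric_hahn_banach_point_closed hSconv hSclosed hms
    set z : H := (InnerProductSpace.toDual ℝ H).symm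
      (φ.comp (ContinuousLinearMap.inr ℝ ℝ H)) with hz
    have hz_apply : ∀ v : H, (inner ℝ z v : ℝ) = φ (0, v) := by
      intro v
      rw [hz]
      exact InnerProductSpace.toDual_symm_apply
    set b : ℝ := φ (1, 0) with hb
    have hφ : ∀ (a : ℝ) (v : H), φ (a, v) = a * b + inner ℝ z v := by
      intro a v
      have h1 : ((a, v) : ℝ × H) = a • ((1 : ℝ), (0 : H)) + ((0 : ℝ), v) := by
        ext <;> simp
      rw [h1, map_add, map_smul, smul_eq_mul, hz_apply v, hb]
    have hmb : m * b < u := by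
      have h1 := hu1
      rw [hφ m 0] at h1
      simpa using h1
    have hS' : ∀ p ∈ S, u < p.1 * b + inner ℝ z p.2 := by
      intro p hp
      have h1 := hu2 p hp
      rwa [show p = (p.1, p.2) from rfl, hφ p.1 p.2] at h1
    rcases lt_trichotomy b 0 with hbneg | hbzero | hbpos
    · -- b < 0
      have hbne : b ≠ 0 := ne_of_lt hbneg
      have h1 : f (b⁻¹ • z) ≤ ((b⁻¹ * u : ℝ) : EReal) := by
        apply hub
        intro p hp
        have h2 := hS' p hp
        have h3 : (inner ℝ p.2 (b⁻¹ • z) : ℝ) = b⁻¹ * inner ℝ z p.2 := by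
          rw [real_inner_smul_right, real_inner_comm]
        rw [h3]
        have h4 : b⁻¹ < 0 := inv_lt_zero.mpr hbneg
        have h5 : p.1 + b⁻¹ * (inner ℝ z p.2 : ℝ) = b⁻¹ * (p.1 * b + inner ℝ z p.2) := by
          field_simp
          try ring
        rw [h5]
        exact mul_le_mul_of_nonpos_left h2.le h4.le
      have h7 : b⁻¹ * u < m := by
        rw [show b⁻¹ * u = u / b by rw [div_eq_inv_mul], div_lt_iff_of_neg hbneg]
        exact hmb
      have h8 := (hlow (b⁻¹ • z)).trans h1
      have h9 : m ≤ b⁻¹ * u := by exact_mod_cast h8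
      linarith
    · -- b = 0
      have hu0 : 0 < u := by
        rw [hbzero] at hmb
        simpa using hmb
      have hsub : closure (Prod.snd '' S) ⊆ {v : H | u ≤ inner ℝ z v} := by
        apply closure_minimal
        · rintro v ⟨p, hp, rfl⟩
          have h1 := hS' p hp
          rw [hbzero] at h1
          simp only [mul_zero, zero_add] at h1
          exact h1.le
        · exact isClosed_le continuous_const (Continuous.inner continuous_const continuous_id)
      have h2 := hsub h0cl
      simp only [Set.mem_setOf_eq, inner_zero_right] at h2
      linarith
    · -- b > 0
      have hbne : b ≠ 0 := ne_of_gt hbpos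
      have hmu : m < u / b := (lt_div_iff₀ hbpos).mpr hmb
      obtain ⟨ε', hε'⟩ : ∃ e : ℝ, e = u / b - m := ⟨_, rfl⟩
      have hε'pos : 0 < ε' := by rw [hε']; linarith
      obtain ⟨xh, hxh⟩ := happrox (ε' / 2) (by linarith)
      obtain ⟨C, hC⟩ : ∃ e : ℝ, e = ‖xh - b⁻¹ • z‖ := ⟨_, rfl⟩
      have hC0 : 0 ≤ C := hC ▸ norm_nonneg _
      obtain ⟨η, hη⟩ : ∃ e : ℝ, e = ε' / (2 * (C + 1)) := ⟨_, rfl⟩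
      have hηpos : 0 < η := hη ▸ div_pos hε'pos (by linarith)
      obtain ⟨v, hvV, hvnorm⟩ : ∃ v ∈ Prod.snd '' S, ‖v‖ < η := by
        obtain ⟨v, hv1, hv2⟩ := Metric.mem_closure_iff.mp h0cl η hηpos
        refine ⟨v, hv1, ?_⟩
        rwa [dist_comm, dist_zero_right] at hv2
      obtain ⟨p, hpS', hpv⟩ := hvV
      have h1 := hS' p hpS'
      have hterm2 := hterm xh p hpS'
      have h2 : (inner ℝ p.2 xh : ℝ) = inner ℝ p.2 (xh - b⁻¹ • z) + b⁻¹ * inner ℝ z p.2 := by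
        rw [inner_sub_right, real_inner_smul_right, real_inner_comm p.2 z]
        ring
      have h3 : -(η * C) ≤ (inner ℝ p.2 (xh - b⁻¹ • z) : ℝ) := by
        have habs := abs_real_inner_le_norm p.2 (xh - b⁻¹ • z)
        rw [← hC] at habs
        have hb1 : ‖p.2‖ * C ≤ η * C := by
          apply mul_le_mul_of_nonneg_right _ hC0
          rw [hpv]
          exact hvnorm.le
        have h4 := neg_abs_le (inner ℝ p.2 (xh - b⁻¹ • z) : ℝ)
        linarith
      have h5 : u / b < p.1 + b⁻¹ * inner ℝ z p.2 := by
        have h6 : b⁻¹ * u < b⁻¹ * (p.1 * b + inner ℝ z p.2) :=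
          mul_lt_mul_of_pos_left h1 (inv_pos.mpr hbpos)
        have h7 : b⁻¹ * (p.1 * b + (inner ℝ z p.2 : ℝ)) = p.1 + b⁻¹ * inner ℝ z p.2 := by
          field_simp
          try ring
        rw [div_eq_inv_mul]
        linarith [h6, h7.symm.le, h7.le]
      have h9 : η * C < ε' / 2 := by
        have h10 : η * (2 * (C + 1)) = ε' := by
          rw [hη]
          exact div_mul_cancel₀ _ (by positivity)
        have h11 : η * C < η * (C + 1) := mul_lt_mul_of_pos_left (lt_add_one C) hηpos
        nlinarith [h10, h11, hηpos]
      have h8 : m + ε' / 2 < p.1 + inner ℝ p.2 xh := by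
        rw [h2]
        have : u / b = m + ε' := by rw [hε']; ring
        linarith [h3, h5, h9]
      have h11 : ((m + ε' / 2 : ℝ) : EReal) < f xh :=
        lt_of_lt_of_le (by exact_mod_cast h8) hterm2
      exact absurd hxh (not_le.mpr h11)
  -- conclusion
  refine ⟨⟨fun hf => ?_, fun ha x => ?_⟩, hpart2⟩
  · by_contra hneg
    push_neg at hneg
    exact absurd (hf (pstar.1⁻¹ • pstar.2)) (not_le.mpr (hpart2 hneg))
  · have hm0 : 0 ≤ m := by
      by_contra hm'
      push_neg at hm'
      have h1 := hvar _ hmS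
      simp only [inner_zero_right] at h1
      have h2 : pstar.1 * m ≤ 0 := by nlinarith [mul_nonneg ha (neg_nonneg.mpr hm'.le)]
      have h3 : pstar.1 ^ 2 = 0 ∧ ‖pstar.2‖ ^ 2 = 0 := by
        constructor <;> nlinarith [sq_nonneg pstar.1, sq_nonneg ‖pstar.2‖]
      have hv0 : pstar.2 = 0 := by
        have := h3.2
        have : ‖pstar.2‖ = 0 := by nlinarith [norm_nonneg pstar.2]
        exact norm_eq_zero.mp this
      have ha0 : pstar.1 = 0 := by
        have := h3.1
        exact (pow_eq_zero_iff two_ne_zero).mp this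
      obtain ⟨xh, hxh⟩ := happrox (-m / 2) (by linarith)
      have h4 := hterm xh pstar hpmem
      rw [ha0, hv0] at h4
      simp only [inner_zero_left, add_zero, EReal.coe_zero] at h4
      have h5 := h4.trans hxh
      have h6 : (0 : ℝ) ≤ m + -m / 2 := by exact_mod_cast h5
      linarith
    calc (0 : EReal) = ((0 : ℝ) : EReal) := rfl
      _ ≤ (m : EReal) := by exact_mod_cast hm0
      _ ≤ f x := hlow x
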